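/- Let r ≥ 2 be a natural number and let 1 ≤ k ≤ r − 1. Let f : ℝ → ℂ be r-times continuously differentiable and suppose both f and its r-th derivative f^{(r)} belong to L²(ℝ). Then the k-th derivative f^{(k)} belongs to L²(ℝ) and ‖f^{(k)}‖_{L²(ℝ)} ≤ ‖f‖_{L²(ℝ)}^{1 − k/r} · ‖f^{(r)}‖_{L²(ℝ)}^{k/r}. -/

import Mathlib

open MeasureTheory

open Set Filter intervalIntegral
open scoped ENNReal NNReal Nat Topology ComplexConjugate

noncomputable section


lemma hlp_taylor_integral (f : ℝ → ℂ) (n : ℕ) (hf : ContDiff ℝ (n + 1 : ℕ) f) (x y : ℝ) :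
    f y = (∑ m ∈ Finset.range (n + 1), ((m ! : ℝ)⁻¹ * (y - x) ^ m) • iteratedDeriv m f x)
      + ∫ t in x..y, (((n)! : ℝ)⁻¹ * (y - t) ^ n) • iteratedDeriv (n + 1) f t := by
  have hderiv : ∀ t : ℝ, HasDerivAt (fun t => taylorWithinEval f n univ t y)
      (((n ! : ℝ)⁻¹ * (y - t) ^ n) • iteratedDerivWithin (n + 1) f univ t) t := by
    intro t
    have h := hasDerivWithinAt_taylorWithinEval (f := f) (x := y) (y := t) (n := n)
      (s := univ) (s' := univ) uniqueDiffOn_univ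
      (by simp [nhdsWithin_univ]) (mem_univ t) (subset_refl _)
      (contDiffOn_univ.mpr (hf.of_le (m := n) (by exact_mod_cast Nat.le_succ n)))
      ?_
    · exact (hasDerivWithinAt_univ.mp h)
    · rw [iteratedDerivWithin_univ]
      exact ((hf.differentiable_iteratedDeriv n (by exact_mod_cast Nat.lt_succ_self n)) t).differentiableWithinAt
  have hcont : Continuous (fun t => (((n)! : ℝ)⁻¹ * (y - t) ^ n) • iteratedDeriv (n + 1) f t) := by
    exact (continuous_const.mul ((continuous_const.sub continuous_id).pow n)).smul
      (hf.continuous_iteratedDeriv (n + 1) le_rfl)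
  have hint := intervalIntegral.integral_eq_sub_of_hasDerivAt
      (f := fun t => taylorWithinEval f n univ t y)
      (f' := fun t => (((n)! : ℝ)⁻¹ * (y - t) ^ n) • iteratedDeriv (n + 1) f t)
      (a := x) (b := y)
      (fun t _ => by simpa [iteratedDerivWithin_univ] using hderiv t)
      (hcont.intervalIntegrable x y)
  rw [hint]
  simp only [taylorWithinEval_self, taylor_within_apply, iteratedDerivWithin_univ]
  abel

lemma hlp_weights (r j : ℕ) (hr : 0 < r) (hj : j < r) :
    ∃ w : Fin r → ℝ, ∀ m : Fin r,
      (∑ i, w i * ((i : ℝ) / r) ^ (m : ℕ)) = if m = j then 1 else 0 := by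
  set t : Fin r → ℝ := fun i => (i : ℝ) / r with ht
  set M : Matrix (Fin r) (Fin r) ℝ := (Matrix.vandermonde t).transpose with hM
  have hdet : IsUnit M.det := by
    rw [hM, Matrix.det_transpose]
    refine isUnit_iff_ne_zero.mpr (Matrix.det_vandermonde_ne_zero_iff.mpr ?_)
    intro a b hab
    have : (a : ℝ) = b := by
      simp only [ht, div_left_inj' (show (r:ℝ) ≠ 0 by exact_mod_cast hr.ne')] at hab
      exact_mod_cast hab
    exact Fin.ext (by exact_mod_cast this)
  set e : Fin r → ℝ := fun m => if (m : ℕ) = j then 1 else 0 with he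
  refine ⟨M⁻¹.mulVec e, fun m => ?_⟩
  have : M.mulVec (M⁻¹.mulVec e) = e := by
    rw [Matrix.mulVec_mulVec, Matrix.mul_nonsing_inv _ hdet, Matrix.one_mulVec]
  have hm := congrFun this m
  simpa [Matrix.mulVec, dotProduct, hM, Matrix.vandermonde, he, mul_comm] using hm

lemma hlp_window (g : ℝ → ℂ) (hg : Continuous g) (h2 : MemLp g 2 (volume : Measure ℝ)) :
    MemLp (fun x => ∫ s in Ioc x (x + 1), ‖g s‖) 2 (volume : Measure ℝ) := by
  have hgn : Continuous fun s => ‖g s‖ := hg.norm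
  have hmeas : Measurable fun s => (‖g s‖₊ : ℝ≥0∞) := hg.measurable.nnnorm.coe_nnreal_ennreal
  set Φ : ℝ → ℝ≥0∞ := fun x => ∫⁻ s in Ioc x (x + 1), (‖g s‖₊ : ℝ≥0∞) with hΦ
  set Ψ : ℝ → ℝ≥0∞ := fun x => ∫⁻ s in Ioc x (x + 1), (‖g s‖₊ : ℝ≥0∞) ^ (2 : ℝ) with hΨ
  -- F x = (Φ x).toReal
  have hF : ∀ x : ℝ, (∫ s in Ioc x (x + 1), ‖g s‖) = (Φ x).toReal := by
    intro x
    simp only [hΦ, ← enorm_eq_nnnorm]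
    rw [← ofReal_integral_norm_eq_lintegral_enorm
      ((hg.integrableOn_Icc (a := x) (b := x+1)).mono_set Ioc_subset_Icc_self),
      ENNReal.toReal_ofReal]
    exact integral_nonneg fun s => norm_nonneg _
  -- measurability: continuity of primitive
  have hcont : Continuous fun x => ∫ s in Ioc x (x + 1), ‖g s‖ := by
    have hInt : ∀ a b : ℝ, IntervalIntegrable (fun s => ‖g s‖) volume a b :=
      fun a b => (hgn.intervalIntegrable a b)
    have hprim := intervalIntegral.continuous_primitive (f := fun s => ‖g s‖)
      (μ := volume) hInt 0
    have : (fun x => ∫ s in Ioc x (x + 1), ‖g s‖)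
        = fun x => (∫ s in (0:ℝ)..(x+1), ‖g s‖) - ∫ s in (0:ℝ)..x, ‖g s‖ := by
      funext x
      rw [← intervalIntegral.integral_of_le (by linarith : x ≤ x + 1),
        ← intervalIntegral.integral_interval_sub_left (hInt 0 (x+1)) (hInt 0 x)]
    rw [this]
    exact (hprim.comp (continuous_id.add continuous_const)).sub hprim
  -- Hölder: Φ x ^ 2 ≤ Ψ x
  have hHolder : ∀ x : ℝ, Φ x ^ (2 : ℝ) ≤ Ψ x := by
    intro x
    have h := ENNReal.lintegral_mul_le_Lp_mul_Lq (volume.restrict (Ioc x (x + 1)))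
      (Real.holderConjugate_iff_eq_conjExponent (by norm_num) |>.mpr (by norm_num) :
        Real.HolderConjugate 2 2)
      (hmeas.aemeasurable) (aemeasurable_const (b := (1 : ℝ≥0∞)))
    simp only [Pi.mul_apply, mul_one] at h
    have hvol : (volume.restrict (Ioc x (x + 1))) univ = 1 := by
      simp [Real.volume_Ioc]
    calc Φ x ^ (2 : ℝ) ≤ ((Ψ x) ^ (1 / 2 : ℝ) * (∫⁻ _s in Ioc x (x+1), (1:ℝ≥0∞) ^ (2:ℝ)) ^ (1/2 : ℝ)) ^ (2 : ℝ) := by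
          apply ENNReal.rpow_le_rpow _ (by norm_num)
          exact le_trans (le_of_eq rfl) h
      _ = Ψ x := by
          rw [lintegral_const, hvol]
          simp only [ENNReal.one_rpow, mul_one, one_mul]
          rw [← ENNReal.rpow_mul]
          norm_num
  -- Tonelli
  set h : ℝ → ℝ≥0∞ := fun s => (‖g s‖₊ : ℝ≥0∞) ^ (2 : ℝ) with hh
  have hhm : Measurable h := hmeas.pow_const _
  have hTon : (∫⁻ x, Ψ x) = ∫⁻ s, h s := by
    have hunc : Measurable (Function.uncurry fun x s => (Ioc x (x + 1)).indicator h s) := by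
      have : (Function.uncurry fun x s => (Ioc x (x + 1)).indicator h s)
          = ({p : ℝ × ℝ | p.1 < p.2} ∩ {p : ℝ × ℝ | p.2 ≤ p.1 + 1}).indicator
            (fun p => h p.2) := by
        funext p
        rcases p with ⟨x, s⟩
        simp only [Function.uncurry]
        by_cases hx : s ∈ Ioc x (x + 1)
        · rw [Set.indicator_of_mem hx, Set.indicator_of_mem]
          exact ⟨hx.1, hx.2⟩
        · rw [Set.indicator_of_notMem hx, Set.indicator_of_notMem]
          intro hcontra
          exact hx ⟨hcontra.1, hcontra.2⟩
      rw [this]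
      exact (hhm.comp measurable_snd).indicator
        ((measurableSet_lt measurable_fst measurable_snd).inter
          (measurableSet_le measurable_snd (measurable_fst.add_const 1)))
    calc (∫⁻ x, Ψ x) = ∫⁻ x, ∫⁻ s, (Ioc x (x + 1)).indicator h s := by
          refine lintegral_congr fun x => ?_
          rw [lintegral_indicator measurableSet_Ioc]
      _ = ∫⁻ s, ∫⁻ x, (Ioc x (x + 1)).indicator h s := by
          exact lintegral_lintegral_swap hunc.aemeasurable
      _ = ∫⁻ s, h s := by
          refine lintegral_congr fun s => ?_
          have : ∀ x : ℝ, (Ioc x (x + 1)).indicator h s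
              = (Ico (s - 1) s).indicator (fun _ => h s) x := by
            intro x
            by_cases hx : s ∈ Ioc x (x + 1)
            · rw [Set.indicator_of_mem hx, Set.indicator_of_mem]
              constructor <;> [linarith [hx.2]; exact hx.1]
            · rw [Set.indicator_of_notMem hx, Set.indicator_of_notMem]
              rw [mem_Ioc] at hx
              rw [mem_Ico]
              intro hc
              exact hx ⟨hc.2, by linarith [hc.1]⟩
          simp_rw [this]
          rw [lintegral_indicator_const measurableSet_Ico, Real.volume_Ico]
          simp
  -- finiteness of ∫⁻ h
  have hfin : (∫⁻ s, h s) < ∞ := by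
    have h2' := h2.2
    rw [eLpNorm_eq_lintegral_rpow_enorm_toReal (by norm_num) (by norm_num)] at h2'
    have : ((∫⁻ s, (‖g s‖₊ : ℝ≥0∞) ^ ENNReal.toReal 2)) ^ (1 / ENNReal.toReal 2) < ∞ := h2'
    rw [ENNReal.rpow_lt_top_iff_of_pos (by norm_num)] at this
    simpa [hh, ENNReal.toReal_ofNat] using this
  -- assemble
  refine ⟨hcont.aestronglyMeasurable, ?_⟩
  rw [eLpNorm_eq_lintegral_rpow_enorm_toReal (by norm_num) (by norm_num)]
  refine ENNReal.rpow_lt_top_of_nonneg (by positivity) ?_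
  have hb : (∫⁻ x, (‖(∫ s in Ioc x (x + 1), ‖g s‖)‖₊ : ℝ≥0∞) ^ ENNReal.toReal 2) ≤ ∫⁻ s, h s := by
    rw [← hTon]
    refine lintegral_mono fun x => ?_
    have h1 : (‖(∫ s in Ioc x (x + 1), ‖g s‖)‖₊ : ℝ≥0∞) ≤ Φ x := by
      rw [hF x]
      calc (‖(Φ x).toReal‖₊ : ℝ≥0∞) = ENNReal.ofReal ((Φ x).toReal) := by
            rw [← enorm_eq_nnnorm, ← ofReal_norm, Real.norm_of_nonneg ENNReal.toReal_nonneg]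
        _ ≤ Φ x := ENNReal.ofReal_toReal_le
    calc (‖(∫ s in Ioc x (x + 1), ‖g s‖)‖₊ : ℝ≥0∞) ^ ENNReal.toReal 2
        ≤ (Φ x) ^ (2 : ℝ) := by
          rw [ENNReal.toReal_ofNat]
          exact ENNReal.rpow_le_rpow h1 (by norm_num)
      _ ≤ Ψ x := hHolder x
  exact (lt_of_le_of_lt hb hfin).ne

lemma hlp_memL2 (r : ℕ) (hr : 1 ≤ r) (f : ℝ → ℂ) (hf : ContDiff ℝ (r : ℕ∞) f)
    (h0 : MemLp f 2 (volume : Measure ℝ))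
    (hr2 : MemLp (iteratedDeriv r f) 2 (volume : Measure ℝ)) :
    ∀ j ≤ r, MemLp (iteratedDeriv j f) 2 (volume : Measure ℝ) := by
  intro j hj
  rcases eq_or_lt_of_le hj with rfl | hjr
  · exact hr2
  have hrpos : 0 < r := hr
  set n := r - 1 with hn
  have hrn : r = n + 1 := (Nat.succ_pred_eq_of_pos hrpos).symm
  have hf' : ContDiff ℝ (n + 1 : ℕ) f := by
    rw [← hrn]; exact hf.of_le (by exact_mod_cast le_rfl)
  obtain ⟨w, hw⟩ := hlp_weights r j hrpos hjr
  -- remainders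
  set R : Fin r → ℝ → ℂ := fun i x =>
    ∫ t in x..(x + (i : ℝ) / r), ((n ! : ℝ)⁻¹ * (x + (i : ℝ) / r - t) ^ n) • iteratedDeriv r f t
    with hR
  have taylor : ∀ (i : Fin r) (x : ℝ),
      f (x + (i : ℝ) / r) = (∑ m ∈ Finset.range r, ((m ! : ℝ)⁻¹ * ((i : ℝ) / r) ^ m) •
        iteratedDeriv m f x) + R i x := by
    intro i x
    have h := hlp_taylor_integral f n hf' x (x + (i : ℝ) / r)
    rw [← hrn] at h
    simpa [add_sub_cancel_left, hR] using h
  -- key identity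
  have key : ∀ x : ℝ, iteratedDeriv j f x
      = (j ! : ℝ) • ((∑ i : Fin r, w i • f (x + (i : ℝ) / r)) - ∑ i : Fin r, w i • R i x) := by
    intro x
    have h1 : (∑ i : Fin r, w i • f (x + (i : ℝ) / r))
        = (∑ i : Fin r, ∑ m ∈ Finset.range r,
            (w i * (((i : ℝ) / r) ^ m * (m ! : ℝ)⁻¹)) • iteratedDeriv m f x)
          + ∑ i : Fin r, w i • R i x := by
      rw [← Finset.sum_add_distrib]
      refine Finset.sum_congr rfl fun i _ => ?_
      rw [taylor i x, smul_add, Finset.smul_sum]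
      congr 1
      refine Finset.sum_congr rfl fun m _ => ?_
      rw [smul_smul]
      ring_nf
    have h2 : (∑ i : Fin r, ∑ m ∈ Finset.range r,
        (w i * (((i : ℝ) / r) ^ m * (m ! : ℝ)⁻¹)) • iteratedDeriv m f x)
        = (j ! : ℝ)⁻¹ • iteratedDeriv j f x := by
      rw [Finset.sum_comm]
      have : ∀ m ∈ Finset.range r, (∑ i : Fin r,
          (w i * (((i : ℝ) / r) ^ m * (m ! : ℝ)⁻¹)) • iteratedDeriv m f x)
          = ((if m = j then 1 else 0) * (m ! : ℝ)⁻¹) • iteratedDeriv m f x := by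
        intro m hm
        rw [← Finset.sum_smul]
        congr 1
        rw [Finset.mem_range] at hm
        have := hw ⟨m, hm⟩
        simp only [Fin.mk.injEq] at this
        rw [← this, Finset.sum_mul]
        refine Finset.sum_congr rfl fun i _ => by ring
      rw [Finset.sum_congr rfl this]
      have hsplit : ∀ m ∈ Finset.range r, ((if m = j then (1:ℝ) else 0) * (m ! : ℝ)⁻¹) •
          iteratedDeriv m f x
          = if m = j then ((m ! : ℝ)⁻¹ • iteratedDeriv m f x) else 0 := by
        intro m _
        by_cases hmj : m = j <;> simp [hmj]
      rw [Finset.sum_congr rfl hsplit, Finset.sum_ite_eq' (Finset.range r) j]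
      simp [Finset.mem_range.mpr hjr]
    rw [h1, h2]
    rw [add_sub_cancel_right, smul_smul]
    rw [mul_inv_cancel₀ (by positivity : (j ! : ℝ) ≠ 0), one_smul]
  -- pointwise bound
  have hDrcont : Continuous (iteratedDeriv r f) :=
    hf.continuous_iteratedDeriv r (by exact_mod_cast le_rfl)
  set F : ℝ → ℝ := fun x => ∫ s in Ioc x (x + 1), ‖iteratedDeriv r f s‖ with hFdef
  have hFnonneg : ∀ x, 0 ≤ F x := fun x => integral_nonneg fun s => norm_nonneg _
  have hRbound : ∀ (i : Fin r) (x : ℝ), ‖R i x‖ ≤ (n ! : ℝ)⁻¹ * F x := by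
    intro i x
    have hirpos : (0:ℝ) ≤ (i : ℝ) / r := by positivity
    have hir1 : ((i : ℝ)) / r ≤ 1 := by
      apply div_le_one_of_le₀ _ (by positivity)
      exact_mod_cast (le_of_lt i.isLt)
    have hcont1 : Continuous fun t => ((n ! : ℝ)⁻¹ * (x + (i:ℝ)/r - t) ^ n) •
        iteratedDeriv r f t :=
      (continuous_const.mul ((continuous_const.sub continuous_id).pow n)).smul hDrcont
    calc ‖R i x‖ ≤ ∫ t in x..(x + (i:ℝ)/r),
          ‖((n ! : ℝ)⁻¹ * (x + (i:ℝ)/r - t) ^ n) • iteratedDeriv r f t‖ :=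
        intervalIntegral.norm_integral_le_integral_norm (by linarith)
      _ ≤ ∫ t in x..(x + (i:ℝ)/r), (n ! : ℝ)⁻¹ * ‖iteratedDeriv r f t‖ := by
          apply intervalIntegral.integral_mono_on (by linarith)
            (hcont1.norm.intervalIntegrable _ _)
            ((continuous_const.mul hDrcont.norm).intervalIntegrable _ _)
          intro t ht
          rw [norm_smul]
          apply mul_le_mul_of_nonneg_right _ (norm_nonneg _)
          rw [Real.norm_eq_abs, abs_mul, abs_pow]
          have h1 : |x + (i:ℝ)/r - t| ≤ 1 := by
            rw [abs_le]; constructor <;> [linarith [ht.1, ht.2]; linarith [ht.1, ht.2]]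
          calc |(n ! : ℝ)⁻¹| * |x + (i:ℝ)/r - t| ^ n
              ≤ |(n ! : ℝ)⁻¹| * 1 := by
                apply mul_le_mul_of_nonneg_left _ (abs_nonneg _)
                exact pow_le_one₀ (abs_nonneg _) h1
            _ = (n ! : ℝ)⁻¹ := by rw [mul_one, abs_of_pos (by positivity)]
      _ = (n ! : ℝ)⁻¹ * ∫ t in x..(x + (i:ℝ)/r), ‖iteratedDeriv r f t‖ := by
          rw [intervalIntegral.integral_const_mul]
      _ ≤ (n ! : ℝ)⁻¹ * F x := by
          apply mul_le_mul_of_nonneg_left _ (by positivity)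
          rw [intervalIntegral.integral_of_le (by linarith)]
          apply setIntegral_mono_set
            ((hDrcont.norm.integrableOn_Icc (a := x) (b := x+1)).mono_set Ioc_subset_Icc_self)
            (ae_of_all _ fun s => norm_nonneg _)
            (HasSubset.Subset.eventuallyLE (Ioc_subset_Ioc_right (by linarith)))
  have hbound : ∀ x : ℝ, ‖iteratedDeriv j f x‖ ≤ (j ! : ℝ) *
      ((∑ i : Fin r, |w i| * ‖f (x + (i:ℝ)/r)‖)
        + (∑ i : Fin r, |w i|) * ((n ! : ℝ)⁻¹ * F x)) := by
    intro x
    rw [key x, norm_smul, Real.norm_eq_abs, abs_of_pos (by positivity : (0:ℝ) < (j ! : ℝ))]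
    apply mul_le_mul_of_nonneg_left _ (by positivity)
    calc ‖(∑ i : Fin r, w i • f (x + (i:ℝ)/r)) - ∑ i : Fin r, w i • R i x‖
        ≤ ‖∑ i : Fin r, w i • f (x + (i:ℝ)/r)‖ + ‖∑ i : Fin r, w i • R i x‖ := norm_sub_le _ _
      _ ≤ (∑ i : Fin r, |w i| * ‖f (x + (i:ℝ)/r)‖) + ∑ i : Fin r, |w i| * ‖R i x‖ := by
          apply add_le_add <;>
          · refine le_trans (norm_sum_le _ _) (le_of_eq (Finset.sum_congr rfl fun i _ => ?_))
            rw [norm_smul, Real.norm_eq_abs]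
      _ ≤ (∑ i : Fin r, |w i| * ‖f (x + (i:ℝ)/r)‖)
          + (∑ i : Fin r, |w i|) * ((n ! : ℝ)⁻¹ * F x) := by
          apply add_le_add le_rfl
          rw [Finset.sum_mul]
          exact Finset.sum_le_sum fun i _ =>
            mul_le_mul_of_nonneg_left (hRbound i x) (abs_nonneg _)
  -- assemble MemLp
  have hwin := hlp_window (iteratedDeriv r f) hDrcont hr2
  have hsum : MemLp (fun x => ∑ i : Fin r, |w i| * ‖f (x + (i:ℝ)/r)‖) 2
      (volume : Measure ℝ) := by
    apply memLp_finset_sum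
    intro i _
    have hmp : MeasurePreserving (fun x : ℝ => x + (i:ℝ)/r) volume volume :=
      measurePreserving_add_right volume _
    exact ((h0.comp_measurePreserving hmp).norm).const_mul _
  have hG : MemLp (fun x => (j ! : ℝ) *
      ((∑ i : Fin r, |w i| * ‖f (x + (i:ℝ)/r)‖)
        + (∑ i : Fin r, |w i|) * ((n ! : ℝ)⁻¹ * F x))) 2 (volume : Measure ℝ) := by
    apply MemLp.const_mul
    exact hsum.add (((hwin.const_mul _).const_mul _))
  apply hG.of_le ((hf.continuous_iteratedDeriv j
    (by exact_mod_cast hj : (j:WithTop ℕ∞) ≤ (r:ℕ∞))).aestronglyMeasurable)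
  refine ae_of_all _ fun x => ?_
  exact (hbound x).trans (by rw [Real.norm_eq_abs]; exact le_abs_self _)

lemma hlp_mul_integrable (u v : ℝ → ℂ) (hu : MemLp u 2 (volume : Measure ℝ))
    (hv : MemLp v 2 (volume : Measure ℝ)) :
    Integrable (fun x => (starRingEnd ℂ) (u x) * v x) (volume : Measure ℝ) := by
  have h := L2.integrable_inner (𝕜 := ℂ) (hu.toLp u) (hv.toLp v)
  refine h.congr ?_
  filter_upwards [hu.coeFn_toLp, hv.coeFn_toLp] with x hx hy
  rw [RCLike.inner_apply, hx, hy, mul_comm]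

lemma hlp_base (g g₁ g₂ : ℝ → ℂ) (hd1 : ∀ x, HasDerivAt g (g₁ x) x)
    (hd2 : ∀ x, HasDerivAt g₁ (g₂ x) x)
    (h0 : MemLp g 2 (volume : Measure ℝ)) (h1 : MemLp g₁ 2 (volume : Measure ℝ))
    (h2 : MemLp g₂ 2 (volume : Measure ℝ)) :
    eLpNorm g₁ 2 (volume : Measure ℝ) ^ 2
      ≤ eLpNorm g 2 (volume : Measure ℝ) * eLpNorm g₂ 2 (volume : Measure ℝ) := by
  set G := h0.toLp g with hG
  set G₁ := h1.toLp g₁ with hG₁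
  set G₂ := h2.toLp g₂ with hG₂
  -- integration by parts
  have hibp : (∫ x, (starRingEnd ℂ) (g₁ x) * g₁ x)
      = - ∫ x, (starRingEnd ℂ) (g₂ x) * g x := by
    have := integral_mul_deriv_eq_deriv_mul_of_integrable
      (u := fun x => (starRingEnd ℂ) (g₁ x)) (v := g)
      (u' := fun x => (starRingEnd ℂ) (g₂ x)) (v' := g₁)
      (fun x _ => (hd2 x).star) (fun x _ => hd1 x)
      ?_ ?_ ?_
    · exact this
    · exact hlp_mul_integrable g₁ g₁ h1 h1
    · exact hlp_mul_integrable g₂ g h2 h0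
    · exact hlp_mul_integrable g₁ g h1 h0
  -- inner products
  have hinner1 : (inner ℂ G₁ G₁ : ℂ) = ∫ x, (starRingEnd ℂ) (g₁ x) * g₁ x := by
    rw [L2.inner_def]
    refine integral_congr_ae ?_
    filter_upwards [h1.coeFn_toLp] with x hx
    rw [RCLike.inner_apply, hx, mul_comm]
  have hinner2 : (inner ℂ G₂ G : ℂ) = ∫ x, (starRingEnd ℂ) (g₂ x) * g x := by
    rw [L2.inner_def]
    refine integral_congr_ae ?_
    filter_upwards [h2.coeFn_toLp, h0.coeFn_toLp] with x hx hy
    rw [RCLike.inner_apply, hx, hy, mul_comm]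
  have hkey : (‖G₁‖ : ℝ) ^ 2 ≤ ‖G₂‖ * ‖G‖ := by
    have e1 : (inner ℂ G₁ G₁ : ℂ) = - inner ℂ G₂ G := by rw [hinner1, hinner2, hibp]
    have e2 : (‖G₁‖ : ℝ) ^ 2 = Complex.re (inner ℂ G₁ G₁ : ℂ) := by
      rw [@inner_self_eq_norm_sq_to_K ℂ]
      simp [← Complex.ofReal_pow]
    rw [e2, e1]
    calc Complex.re (- (inner ℂ G₂ G : ℂ)) ≤ |Complex.re (- (inner ℂ G₂ G : ℂ))| := le_abs_self _
      _ ≤ ‖- (inner ℂ G₂ G : ℂ)‖ := Complex.abs_re_le_norm _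
      _ = ‖(inner ℂ G₂ G : ℂ)‖ := norm_neg _
      _ ≤ ‖G₂‖ * ‖G‖ := norm_inner_le_norm _ _
  -- convert to eLpNorm
  have hne0 : eLpNorm g 2 (volume : Measure ℝ) ≠ ∞ := h0.2.ne
  have hne1 : eLpNorm g₁ 2 (volume : Measure ℝ) ≠ ∞ := h1.2.ne
  have hne2 : eLpNorm g₂ 2 (volume : Measure ℝ) ≠ ∞ := h2.2.ne
  rw [← ENNReal.toReal_le_toReal (ENNReal.pow_ne_top hne1) (ENNReal.mul_ne_top hne0 hne2)]
  rw [ENNReal.toReal_pow, ENNReal.toReal_mul]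
  rw [← Lp.norm_toLp g h0, ← Lp.norm_toLp g₁ h1, ← Lp.norm_toLp g₂ h2]
  calc ‖G₁‖ ^ 2 ≤ ‖G₂‖ * ‖G‖ := hkey
    _ = ‖G‖ * ‖G₂‖ := mul_comm _ _

lemma hlp_combine (r k : ℕ) (hr : 2 ≤ r) (hk1 : 1 ≤ k) (hkr : k ≤ r - 1) (N : ℕ → ℝ≥0∞)
    (hfin : ∀ j, j ≤ r → N j ≠ ∞)
    (hchain : ∀ j, 1 ≤ j → j ≤ r - 1 → N j ^ 2 ≤ N (j - 1) * N (j + 1)) :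
    N k ≤ N 0 ^ (1 - (k : ℝ) / r) * N r ^ ((k : ℝ) / r) := by
  have hkr' : k < r := by omega
  -- zero propagation
  have hup : ∀ j, 1 ≤ j → j ≤ r - 1 → N (j - 1) = 0 → N j = 0 := by
    intro j h1 h2 h0
    have := hchain j h1 h2
    rw [h0, zero_mul] at this
    have h2' : N j ^ 2 = 0 := le_zero_iff.mp this
    exact pow_eq_zero_iff (n := 2) (by norm_num) |>.mp h2'
  have hdown : ∀ j, 1 ≤ j → j ≤ r - 1 → N (j + 1) = 0 → N j = 0 := by
    intro j h1 h2 h0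
    have := hchain j h1 h2
    rw [h0, mul_zero] at this
    have h2' : N j ^ 2 = 0 := le_zero_iff.mp this
    exact pow_eq_zero_iff (n := 2) (by norm_num) |>.mp h2'
  by_cases hNk : N k = 0
  · rw [hNk]; exact zero_le
  -- all values are nonzero
  have hpos : ∀ j, j ≤ r → N j ≠ 0 := by
    -- first: if N 0 = 0 then N k = 0
    have h0case : N 0 = 0 → False := by
      intro h00
      have : ∀ j, j ≤ r - 1 → N j = 0 := by
        intro j
        induction j with
        | zero => exact fun _ => h00
        | succ m ih =>
          intro hm
          have : N m = 0 := ih (by omega)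
          have := hup (m + 1) (by omega) hm (by simpa using this)
          exact this
      exact hNk (this k hkr)
    have hrcase : N r = 0 → False := by
      intro hrr
      have hstep : ∀ m, ∀ i, 1 ≤ i → i + m = r - 1 → N i = 0 := by
        intro m
        induction m with
        | zero =>
          intro i h1 h2
          apply hdown i h1 (by omega)
          have : i + 1 = r := by omega
          rw [this, hrr]
        | succ p ih =>
          intro i h1 h2
          apply hdown i h1 (by omega)
          exact ih (i + 1) (by omega) (by omega)
      exact hNk (hstep (r - 1 - k) k hk1 (by omega))
    intro j hj h0
    rcases Nat.eq_zero_or_pos j with rfl | hj1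
    · exact h0case h0
    rcases eq_or_lt_of_le hj with rfl | hjlt
    · exact hrcase h0
    -- interior zero: propagate to k
    rcases le_or_gt k j with hkj | hjk
    · -- k ≤ j : propagate down from j to k
      have hstep : ∀ m, ∀ i, 1 ≤ i → i + m = j → N i = 0 := by
        intro m
        induction m with
        | zero => intro i _ h2; rw [(by omega : i = j)]; exact h0
        | succ p ih =>
          intro i h1 h2
          apply hdown i h1 (by omega)
          exact ih (i + 1) (by omega) (by omega)
      exact hNk (hstep (j - k) k hk1 (by omega))
    · -- j < k : propagate up from j to k
      have : ∀ i, j ≤ i → i ≤ r - 1 → N i = 0 := by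
        intro i hji hir
        induction i with
        | zero => have hj0 : j = 0 := by omega
                  rw [hj0] at h0; exact h0
        | succ m ih =>
          rcases eq_or_lt_of_le hji with heq | hlt
          · rw [← heq]; exact h0
          · exact hup (m + 1) (by omega) hir (by simpa using ih (by omega) (by omega))
      exact hNk (this k (by omega) hkr)
  -- positive case: logarithms
  set a : ℕ → ℝ := fun j => Real.log ((N j).toReal) with ha
  have htR : ∀ j, j ≤ r → 0 < (N j).toReal :=
    fun j hj => ENNReal.toReal_pos (hpos j hj) (hfin j hj)
  have hconv : ∀ j, 1 ≤ j → j ≤ r - 1 → 2 * a j ≤ a (j - 1) + a (j + 1) := by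
    intro j h1 h2
    have hc := hchain j h1 h2
    have hcR : ((N j).toReal) ^ 2 ≤ (N (j - 1)).toReal * (N (j + 1)).toReal := by
      rw [← ENNReal.toReal_pow, ← ENNReal.toReal_mul]
      exact ENNReal.toReal_mono (ENNReal.mul_ne_top (hfin _ (by omega)) (hfin _ (by omega))) hc
    have hlog := Real.log_le_log (pow_pos (htR j (by omega)) 2) hcR
    rw [Real.log_pow, Real.log_mul (htR (j-1) (by omega)).ne' (htR (j+1) (by omega)).ne'] at hlog
    simpa [ha] using hlog
  set d : ℕ → ℝ := fun i => a (i + 1) - a i with hd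
  have hdmono : ∀ p q, p ≤ q → q ≤ r - 1 → d p ≤ d q := by
    intro p q hpq hqr
    induction q with
    | zero => have : p = 0 := by omega
              rw [this]
    | succ m ih =>
      rcases eq_or_lt_of_le hpq with heq | hlt
      · rw [heq]
      · refine le_trans (ih (by omega) (by omega)) ?_
        have hc := hconv (m + 1) (by omega) (by omega)
        simp only [hd, Nat.add_sub_cancel] at hc ⊢
        linarith
  have hsum1 : ∑ i ∈ Finset.range k, d i = a k - a 0 := Finset.sum_range_sub a k
  have hsum2 : ∑ i ∈ Finset.range r, d i = a r - a 0 := Finset.sum_range_sub a r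
  have hb1 : ∑ i ∈ Finset.range k, d i ≤ (k : ℝ) * d (k - 1) := by
    have := Finset.sum_le_card_nsmul (Finset.range k) d (d (k - 1))
      (fun i hi => hdmono i (k - 1) (by simp at hi; omega) (by omega))
    simpa [nsmul_eq_mul] using this
  have hb2 : ((r : ℝ) - k) * d (k - 1) ≤ ∑ i ∈ Finset.Ico k r, d i := by
    have := Finset.card_nsmul_le_sum (Finset.Ico k r) d (d (k - 1))
      (fun i hi => hdmono (k - 1) i (by simp at hi; omega) (by simp at hi; omega))
    have hcard : (Finset.Ico k r).card = r - k := Nat.card_Ico k r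
    rw [hcard, nsmul_eq_mul, Nat.cast_sub (le_of_lt hkr')] at this
    exact this
  have hsplit : (∑ i ∈ Finset.range k, d i) + ∑ i ∈ Finset.Ico k r, d i
      = ∑ i ∈ Finset.range r, d i := Finset.sum_range_add_sum_Ico d (le_of_lt hkr')
  have hmain : (r : ℝ) * (a k - a 0) ≤ (k : ℝ) * (a r - a 0) := by
    rw [← hsum1, ← hsum2, ← hsplit]
    have hkR : (0:ℝ) ≤ (k:ℝ) := by positivity
    have hrkR : (0:ℝ) ≤ (r:ℝ) - k := by
      have : (k:ℝ) ≤ r := by exact_mod_cast le_of_lt hkr'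
      linarith
    nlinarith [mul_le_mul_of_nonneg_left hb1 hrkR, mul_le_mul_of_nonneg_left hb2 hkR]
  -- exponentiate
  have hrR : (0:ℝ) < (r:ℝ) := by positivity
  set θ : ℝ := (k : ℝ) / r with hθ
  have hθ0 : 0 ≤ θ := by positivity
  have hθ1 : θ ≤ 1 := by
    rw [hθ, div_le_one hrR]
    exact_mod_cast le_of_lt hkr'
  have hak : a k ≤ (1 - θ) * a 0 + θ * a r := by
    have h1 : a k - a 0 ≤ θ * (a r - a 0) := by
      rw [hθ]
      rw [div_mul_eq_mul_div, le_div_iff₀ hrR]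
      calc (a k - a 0) * r = (r : ℝ) * (a k - a 0) := by ring
        _ ≤ (k : ℝ) * (a r - a 0) := hmain
    nlinarith
  have hRfin : N 0 ^ (1 - θ) * N r ^ θ ≠ ∞ :=
    ENNReal.mul_ne_top (ENNReal.rpow_ne_top_of_nonneg (by linarith) (hfin 0 (by omega)))
      (ENNReal.rpow_ne_top_of_nonneg hθ0 (hfin r le_rfl))
  rw [← ENNReal.toReal_le_toReal (hfin k (by omega)) hRfin]
  rw [ENNReal.toReal_mul, ← ENNReal.toReal_rpow, ← ENNReal.toReal_rpow]
  calc (N k).toReal = Real.exp (a k) := (Real.exp_log (htR k (by omega))).symm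
    _ ≤ Real.exp ((1 - θ) * a 0 + θ * a r) := Real.exp_le_exp.mpr hak
    _ = (N 0).toReal ^ (1 - θ) * (N r).toReal ^ θ := by
        rw [Real.exp_add]
        rw [Real.rpow_def_of_pos (htR 0 (by omega)), Real.rpow_def_of_pos (htR r le_rfl)]
        rw [mul_comm (Real.log _), mul_comm (Real.log _)]

/-- **Classical Hardy–Littlewood–Pólya inequality.** If `f : ℝ → ℂ` is `r`-times
continuously differentiable with `f, f⁽ʳ⁾ ∈ L²(ℝ)`, then for `1 ≤ k ≤ r − 1`
the derivative `f⁽ᵏ⁾` belongs to `L²(ℝ)` and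
`‖f⁽ᵏ⁾‖₂ ≤ ‖f‖₂^{1 − k/r} · ‖f⁽ʳ⁾‖₂^{k/r}`. -/
theorem hardy_littlewood_polya
    (r k : ℕ) (hr : 2 ≤ r) (hk1 : 1 ≤ k) (hkr : k ≤ r - 1)
    (f : ℝ → ℂ) (hf : ContDiff ℝ (r : ℕ∞) f)
    (hf2 : MemLp f 2 (volume : Measure ℝ))
    (hfr2 : MemLp (iteratedDeriv r f) 2 (volume : Measure ℝ)) :
    MemLp (iteratedDeriv k f) 2 (volume : Measure ℝ) ∧
    eLpNorm (iteratedDeriv k f) 2 (volume : Measure ℝ)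
      ≤ eLpNorm f 2 (volume : Measure ℝ) ^ (1 - (k : ℝ) / r)
        * eLpNorm (iteratedDeriv r f) 2 (volume : Measure ℝ) ^ ((k : ℝ) / r) := by
  have hr1 : 1 ≤ r := by omega
  have hmem := hlp_memL2 r hr1 f hf hf2 hfr2
  refine ⟨hmem k (by omega), ?_⟩
  set N : ℕ → ℝ≥0∞ := fun j => eLpNorm (iteratedDeriv j f) 2 (volume : Measure ℝ) with hN
  have h00 : eLpNorm f 2 (volume : Measure ℝ) = N 0 := by
    simp [hN, iteratedDeriv_zero]
  rw [h00]
  have hderiv : ∀ m : ℕ, m < r → ∀ x : ℝ,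
      HasDerivAt (iteratedDeriv m f) (iteratedDeriv (m + 1) f x) x := by
    intro m hm x
    have hdiff : Differentiable ℝ (iteratedDeriv m f) :=
      hf.differentiable_iteratedDeriv m (by exact_mod_cast hm)
    have h := (hdiff x).hasDerivAt
    rwa [show deriv (iteratedDeriv m f) x = iteratedDeriv (m + 1) f x by
      rw [iteratedDeriv_succ]] at h
  apply hlp_combine r k hr hk1 hkr N (fun j hj => (hmem j hj).2.ne)
  intro j h1 h2
  have hj1 : j - 1 + 1 = j := by omega
  have hd1 : ∀ x : ℝ, HasDerivAt (iteratedDeriv (j - 1) f) (iteratedDeriv j f x) x := by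
    intro x
    have := hderiv (j - 1) (by omega) x
    rwa [hj1] at this
  exact hlp_base (iteratedDeriv (j - 1) f) (iteratedDeriv j f) (iteratedDeriv (j + 1) f)
    hd1 (hderiv j (by omega)) (hmem (j - 1) (by omega)) (hmem j (by omega))
    (hmem (j + 1) (by omega))
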